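/- arXiv:2109.02758 — 5 statements merged into one kernel-verified Lean document; each statement's English description precedes it below -/
import Mathlib

section
/- Let M be an abelian group regarded as a module over G = ℤ ⊕ ℤ with trivial G-action. Then H²(G, M) is isomorphic to M as an abelian group. -/
open groupCohomology Multiplicative

namespace FreeRankTwoH2

variable {M : Type} [AddCommGroup M]

/-- A normalized 2-cocycle on `ℤ × ℤ` which is symmetric on the generators is a coboundary. -/
lemma key_normalized (g : (ℤ × ℤ) × (ℤ × ℤ) → M)
    (hg : ∀ u v w : ℤ × ℤ, g (u + v, w) + g (u, v) = g (v, w) + g (u, v + w))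
    (h1 : ∀ v : ℤ × ℤ, g (0, v) = 0) (h2 : ∀ u : ℤ × ℤ, g (u, 0) = 0)
    (hsym : g ((1, 0), (0, 1)) = g ((0, 1), (1, 0))) :
    ∃ x : ℤ × ℤ → M, ∀ u v : ℤ × ℤ, x v - x (u + v) + x u = g (u, v) := by
  have hinv : ∀ u : ℤ × ℤ, g (u, -u) = g (-u, u) := by
    intro u
    have h := hg u (-u) u
    simpa [h1, h2] using h
  -- the central extension group structure on `M × ℤ × ℤ`
  letI : Group (M × ℤ × ℤ) :=
  { mul := fun p q => (p.1 + q.1 + g (p.2, q.2), p.2 + q.2)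
    one := (0, 0)
    inv := fun p => (-p.1 - g (p.2, -p.2), -p.2)
    mul_assoc := fun p q r => by
      refine Prod.ext ?_ (add_assoc _ _ _)
      show p.1 + q.1 + g (p.2, q.2) + r.1 + g (p.2 + q.2, r.2)
          = p.1 + (q.1 + r.1 + g (q.2, r.2)) + g (p.2, q.2 + r.2)
      calc p.1 + q.1 + g (p.2, q.2) + r.1 + g (p.2 + q.2, r.2)
          = p.1 + q.1 + r.1 + (g (p.2 + q.2, r.2) + g (p.2, q.2)) := by abel
        _ = p.1 + q.1 + r.1 + (g (q.2, r.2) + g (p.2, q.2 + r.2)) := by rw [hg]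
        _ = p.1 + (q.1 + r.1 + g (q.2, r.2)) + g (p.2, q.2 + r.2) := by abel
    one_mul := fun p => by
      refine Prod.ext ?_ (zero_add _)
      show 0 + p.1 + g (0, p.2) = p.1
      rw [h1, zero_add, add_zero]
    mul_one := fun p => by
      refine Prod.ext ?_ (add_zero _)
      show p.1 + 0 + g (p.2, 0) = p.1
      rw [h2, add_zero, add_zero]
    inv_mul_cancel := fun p => by
      refine Prod.ext ?_ (neg_add_cancel _)
      show -p.1 - g (p.2, -p.2) + p.1 + g (-p.2, p.2) = 0
      rw [← hinv]
      abel }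
  set e₁ : M × ℤ × ℤ := (0, (1, 0)) with he₁
  set e₂ : M × ℤ × ℤ := (0, (0, 1)) with he₂
  have hcomm : Commute e₁ e₂ := by
    show ((0 : M) + 0 + g ((1, 0), (0, 1)), ((1 : ℤ), (0 : ℤ)) + (0, 1))
        = ((0 : M) + 0 + g ((0, 1), (1, 0)), ((0 : ℤ), (1 : ℤ)) + (1, 0))
    rw [hsym, add_comm (((1 : ℤ), (0 : ℤ))) ((0, 1))]
  -- the projection to `ℤ × ℤ` (written multiplicatively)
  let π : (M × ℤ × ℤ) →* Multiplicative (ℤ × ℤ) :=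
  { toFun := fun p => Multiplicative.ofAdd p.2
    map_one' := rfl
    map_mul' := fun p q => rfl }
  have hsnd : ∀ (p : M × ℤ × ℤ) (z : ℤ), (p ^ z).2 = z • p.2 := by
    intro p z
    have : (π (p ^ z)).toAdd = (π p ^ z).toAdd := by rw [map_zpow]
    simpa [π, toAdd_zpow] using this
  have hmulsnd : ∀ p q : M × ℤ × ℤ, (p * q).2 = p.2 + q.2 := fun p q => rfl
  have hmulfst : ∀ p q : M × ℤ × ℤ, (p * q).1 = p.1 + q.1 + g (p.2, q.2) := fun p q => rfl
  set x : ℤ × ℤ → M := fun u => (e₁ ^ u.1 * e₂ ^ u.2).1 with hx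
  have hsnd' : ∀ u : ℤ × ℤ, (e₁ ^ u.1 * e₂ ^ u.2).2 = u := by
    intro u
    rw [hmulsnd, hsnd, hsnd, he₁, he₂]
    simp [Prod.smul_def, Prod.ext_iff]
  have hmul : ∀ u v : ℤ × ℤ,
      e₁ ^ (u.1 + v.1) * e₂ ^ (u.2 + v.2) = (e₁ ^ u.1 * e₂ ^ u.2) * (e₁ ^ v.1 * e₂ ^ v.2) := by
    intro u v
    have hc : e₂ ^ u.2 * e₁ ^ v.1 = e₁ ^ v.1 * e₂ ^ u.2 := (hcomm.symm.zpow_zpow u.2 v.1).eq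
    calc e₁ ^ (u.1 + v.1) * e₂ ^ (u.2 + v.2)
        = (e₁ ^ u.1 * e₁ ^ v.1) * (e₂ ^ u.2 * e₂ ^ v.2) := by rw [zpow_add, zpow_add]
      _ = e₁ ^ u.1 * (e₁ ^ v.1 * e₂ ^ u.2) * e₂ ^ v.2 := by
          rw [mul_assoc, ← mul_assoc (e₁ ^ v.1), mul_assoc (e₁ ^ u.1)]
      _ = e₁ ^ u.1 * (e₂ ^ u.2 * e₁ ^ v.1) * e₂ ^ v.2 := by rw [hc]
      _ = (e₁ ^ u.1 * e₂ ^ u.2) * (e₁ ^ v.1 * e₂ ^ v.2) := by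
          rw [mul_assoc, mul_assoc, mul_assoc]
  have hmain : ∀ u v : ℤ × ℤ, x (u + v) = x u + x v + g (u, v) := by
    intro u v
    have : x (u + v) = (e₁ ^ (u.1 + v.1) * e₂ ^ (u.2 + v.2)).1 := rfl
    rw [this, hmul u v, hmulfst, hsnd', hsnd']
  exact ⟨fun u => -x u, fun u v => by show -x v - -x (u + v) + -x u = g (u, v); rw [hmain u v]; abel⟩

/-- Any 2-cocycle on `ℤ × ℤ` which is symmetric on the generators is a coboundary. -/
lemma key (g : (ℤ × ℤ) × (ℤ × ℤ) → M)
    (hg : ∀ u v w : ℤ × ℤ, g (u + v, w) + g (u, v) = g (v, w) + g (u, v + w))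
    (hsym : g ((1, 0), (0, 1)) = g ((0, 1), (1, 0))) :
    ∃ x : ℤ × ℤ → M, ∀ u v : ℤ × ℤ, x v - x (u + v) + x u = g (u, v) := by
  set k0 : M := g (0, 0) with hk0
  have h0a : ∀ v : ℤ × ℤ, g (0, v) = k0 := by
    intro v
    have h := hg 0 0 v
    simp only [add_zero, zero_add] at h
    exact (add_left_cancel h).symm
  have h0b : ∀ u : ℤ × ℤ, g (u, 0) = k0 := by
    intro u
    have h := hg u 0 0
    simp only [add_zero, zero_add] at h
    exact add_right_cancel h
  have hcoc : ∀ u v w : ℤ × ℤ,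
      (g (u + v, w) - k0) + (g (u, v) - k0) = (g (v, w) - k0) + (g (u, v + w) - k0) := by
    intro u v w
    rw [sub_add_sub_comm, sub_add_sub_comm, hg]
  obtain ⟨x, hxx⟩ := key_normalized (fun p => g p - k0)
    (fun u v w => hcoc u v w)
    (fun v => by show g (0, v) - k0 = 0; rw [h0a]; exact sub_self _)
    (fun u => by show g (u, 0) - k0 = 0; rw [h0b]; exact sub_self _)
    (by show g ((1, 0), (0, 1)) - k0 = g ((0, 1), (1, 0)) - k0; rw [hsym])
  exact ⟨fun u => x u + k0, fun u v => by
    have := hxx u v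
    have h2 : x v - x (u + v) + x u = g (u, v) - k0 := this
    calc (x v + k0) - (x (u + v) + k0) + (x u + k0)
        = (x v - x (u + v) + x u) + k0 := by abel
      _ = g (u, v) := by rw [h2]; abel⟩

lemma mem_cob_iff {k G : Type} [CommRing k] [Group G] {A : Rep k G} (f : cocycles₂ A) :
    f ∈ (coboundaries₂ A).comap (cocycles₂ A).subtype ↔
      ∃ x : G → A, ∀ g h : G, A.ρ g (x h) - x (g * h) + x g = f.1 (g, h) := by
  simp only [Submodule.mem_comap, Submodule.coe_subtype, coboundaries₂, LinearMap.mem_range,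
    funext_iff, Prod.forall, d₁₂_hom_apply]

lemma range_eq {k G : Type} [CommRing k] [Group G] (A : Rep k G) :
    (LinearMap.range (shortComplexH2 A).moduleCatToCycles : Submodule k (cocycles₂ A)) =
      (coboundaries₂ A).comap (cocycles₂ A).subtype := by
  ext x
  constructor
  · rintro ⟨y, rfl⟩
    exact ⟨y, rfl⟩
  · rintro ⟨y, hy⟩
    exact ⟨y, Subtype.ext hy⟩

lemma aux (k : Type) [CommRing k] (M : Type) [AddCommGroup M] [Module k M] :
    Nonempty ((groupCohomology (Rep.trivial k (Multiplicative (ℤ × ℤ)) M) 2) ≃+ M) := by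
  set G := Multiplicative (ℤ × ℤ) with hG
  set A := Rep.trivial k G M with hA
  set x₁ : G := Multiplicative.ofAdd ((1 : ℤ), (0 : ℤ)) with hx₁
  set x₂ : G := Multiplicative.ofAdd ((0 : ℤ), (1 : ℤ)) with hx₂
  -- the evaluation map
  let ev : (G × G → A) →ₗ[k] M :=
  { toFun := fun f => f (x₁, x₂) - f (x₂, x₁)
    map_add' := fun f f' => by
      simp only [Pi.add_apply]
      abel
    map_smul' := fun r f => by
      simp only [Pi.smul_apply, RingHom.id_apply, smul_sub] }
  let κ := ev ∘ₗ (groupCohomology.cocycles₂ A).subtype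
  have hker : (groupCohomology.coboundaries₂ A).comap (groupCohomology.cocycles₂ A).subtype ≤ LinearMap.ker κ := by
    intro f hf
    obtain ⟨y, hy⟩ := (mem_cob_iff f).1 hf
    have hy' : ∀ g h : G, y h - y (g * h) + y g = f.1 (g, h) := by
      intro g h
      have := hy g h
      erw [Rep.trivial_ρ_apply] at this; exact this
    show f.1 (x₁, x₂) - f.1 (x₂, x₁) = 0
    rw [← hy' x₁ x₂, ← hy' x₂ x₁, mul_comm x₂ x₁]
    abel
  let κQ := Submodule.liftQ ((groupCohomology.coboundaries₂ A).comap (groupCohomology.cocycles₂ A).subtype) κ hker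
  -- cocycle conditions, with the trivial action simplified away
  have hcoc : ∀ f : groupCohomology.cocycles₂ A, ∀ g h j : G,
      f.1 (g * h, j) + f.1 (g, h) = f.1 (h, j) + f.1 (g, h * j) := by
    intro f g h j
    have := (groupCohomology.mem_cocycles₂_iff f.1).1 f.2 g h j
    erw [Rep.trivial_ρ_apply] at this; exact this
  -- injectivity
  have hker2 : LinearMap.ker κ ≤ (groupCohomology.coboundaries₂ A).comap (groupCohomology.cocycles₂ A).subtype := by
    intro f hf
    have hf0 : f.1 (x₁, x₂) - f.1 (x₂, x₁) = 0 := hf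
    have hsym : f.1 (x₁, x₂) = f.1 (x₂, x₁) := by rwa [sub_eq_zero] at hf0
    obtain ⟨x, hx⟩ := FreeRankTwoH2.key (M := M)
      (fun p => f.1 (Multiplicative.ofAdd p.1, Multiplicative.ofAdd p.2))
      (fun u v w => hcoc f (Multiplicative.ofAdd u) (Multiplicative.ofAdd v)
        (Multiplicative.ofAdd w))
      hsym
    refine (mem_cob_iff f).2 ⟨fun g => x g.toAdd, fun g h => ?_⟩
    erw [Rep.trivial_ρ_apply]
    exact hx g.toAdd h.toAdd
  have hinj : Function.Injective κQ :=
    LinearMap.ker_eq_bot.1 (Submodule.ker_liftQ_eq_bot _ _ _ hker2)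
  -- surjectivity
  have hsurj : Function.Surjective κQ := by
    intro m
    let fm : G × G → M := fun p => ((p.1.toAdd.1) * (p.2.toAdd.2)) • m
    have hfm : fm ∈ groupCohomology.cocycles₂ A := by
      rw [groupCohomology.mem_cocycles₂_iff]
      intro g h j
      erw [Rep.trivial_ρ_apply]
      show ((g.toAdd.1 + h.toAdd.1) * j.toAdd.2) • m + (g.toAdd.1 * h.toAdd.2) • m
          = (h.toAdd.1 * j.toAdd.2) • m + (g.toAdd.1 * (h.toAdd.2 + j.toAdd.2)) • m
      rw [← add_smul, ← add_smul]
      ring_nf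
    refine ⟨Submodule.Quotient.mk ⟨fm, hfm⟩, ?_⟩
    rw [Submodule.liftQ_apply]
    show fm (x₁, x₂) - fm (x₂, x₁) = m
    show ((1 : ℤ) * 1) • m - ((0 : ℤ) * 0) • m = m
    simp
  exact ⟨((groupCohomology.H2Iso A).toLinearEquiv.trans
    ((Submodule.quotEquivOfEq (M := groupCohomology.cocycles₂ A) _ _ (range_eq A)).trans
    (LinearEquiv.ofBijective κQ ⟨hinj, hsurj⟩))).toAddEquiv⟩

end FreeRankTwoH2

/-- For an abelian group `M` regarded as a module over `G = ℤ ⊕ ℤ` with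
trivial `G`-action, `H²(G, M)` is isomorphic to `M` as an abelian group. -/
theorem groupCohomology_two_trivial_of_free_rank_two
    (M : Type) [AddCommGroup M] [Module ℤ M] :
    Nonempty ((groupCohomology (Rep.trivial ℤ (Multiplicative (ℤ × ℤ)) M) 2) ≃+ M) :=
  FreeRankTwoH2.aux ℤ M
end

section
/- Let A be a commutative ring and n ≥ 1. Then the quotient ring A[X_{ij}]/(det) is faithfully flat as an A-algebra. -/
set_option maxHeartbeats 1000000
set_option synthInstance.maxHeartbeats 400000

open MvPolynomial

namespace DetFFAux

variable {n : ℕ}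

/-- Weight: `n+1` on diagonal positions, `1` off the diagonal. -/
def wt (n : ℕ) : Fin n × Fin n → ℕ := fun p => if p.1 = p.2 then n + 1 else 1

noncomputable def W (n : ℕ) : ((Fin n × Fin n) →₀ ℕ) →+ ℕ := Finsupp.weight (wt n)

lemma W_single (p : Fin n × Fin n) (k : ℕ) : W n (Finsupp.single p k) = k * wt n p := by
  simp [W, Finsupp.weight_apply, Finsupp.sum_single_index, smul_eq_mul]

/-- The exponent of the monomial `∏ i, X (σ i, i)`. -/
noncomputable def msig (σp : Equiv.Perm (Fin n)) : (Fin n × Fin n) →₀ ℕ :=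
  ∑ i, Finsupp.single (σp i, i) 1

noncomputable def diag (n : ℕ) : (Fin n × Fin n) →₀ ℕ := msig 1

lemma W_msig (σp : Equiv.Perm (Fin n)) : W n (msig σp) = ∑ i, wt n (σp i, i) := by
  simp [msig, map_sum, W_single]

lemma W_msig_le (σp : Equiv.Perm (Fin n)) : W n (msig σp) ≤ n * (n + 1) := by
  rw [W_msig]
  calc ∑ i, wt n (σp i, i) ≤ ∑ _i : Fin n, (n + 1) :=
        Finset.sum_le_sum (fun i _ => by unfold wt; split <;> omega)
    _ = n * (n + 1) := by simp [Finset.sum_const, Finset.card_fin, smul_eq_mul]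

lemma W_diag : W n (diag n) = n * (n + 1) := by
  rw [diag, W_msig]
  simp [wt, Finset.sum_const, Finset.card_fin, smul_eq_mul]

lemma W_msig_lt (hn : 1 ≤ n) {σp : Equiv.Perm (Fin n)} (h : σp ≠ 1) :
    W n (msig σp) < n * (n + 1) := by
  obtain ⟨j, hj⟩ : ∃ j, σp j ≠ j := by
    by_contra hc; push_neg at hc; exact h (Equiv.ext hc)
  rw [W_msig]
  calc ∑ i, wt n (σp i, i) < ∑ _i : Fin n, (n + 1) := by
        refine Finset.sum_lt_sum (fun i _ => by unfold wt; split <;> omega)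
          ⟨j, Finset.mem_univ j, ?_⟩
        unfold wt
        rw [if_neg hj]
        omega
    _ = n * (n + 1) := by simp [Finset.sum_const, Finset.card_fin, smul_eq_mul]

variable (B : Type) [CommRing B]

/-- The generic determinant over `B`. -/
noncomputable def gdet (n : ℕ) (B : Type) [CommRing B] : MvPolynomial (Fin n × Fin n) B :=
  (Matrix.of fun i j : Fin n => X (i, j)).det

lemma prod_X_gen {ι : Type} [DecidableEq ι] (s : Finset ι) (f : ι → Fin n × Fin n) :
    (∏ i ∈ s, (X (f i) : MvPolynomial (Fin n × Fin n) B)) =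
      monomial (∑ i ∈ s, Finsupp.single (f i) 1) 1 := by
  induction s using Finset.induction_on with
  | empty => simp [monomial_zero']
  | @insert a s ha ih =>
      rw [Finset.prod_insert ha, Finset.sum_insert ha, ih,
        show (X (f a) : MvPolynomial (Fin n × Fin n) B) = monomial (Finsupp.single (f a) 1) 1
          from rfl, monomial_mul, one_mul]

lemma gdet_eq :
    gdet n B = ∑ σp : Equiv.Perm (Fin n), Equiv.Perm.sign σp • monomial (msig σp) 1 := by
  classical
  rw [gdet, Matrix.det_apply]
  refine Finset.sum_congr rfl fun σp _ => ?_
  rw [msig, ← prod_X_gen B Finset.univ (fun i => (σp i, i))]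
  rfl

lemma gdet_support {ν : (Fin n × Fin n) →₀ ℕ} (hν : ν ∈ (gdet n B).support) :
    ∃ σp : Equiv.Perm (Fin n), ν = msig σp := by
  classical
  rw [gdet_eq] at hν
  obtain ⟨σp, -, hmem⟩ := Finset.mem_biUnion.mp (MvPolynomial.support_sum hν)
  refine ⟨σp, ?_⟩
  have h2 : (Equiv.Perm.sign σp • (monomial (msig σp)) (1 : B)) =
      monomial (msig σp) (Equiv.Perm.sign σp • (1 : B)) := smul_monomial _
  rw [h2] at hmem
  have := support_monomial_subset hmem
  simpa using this

lemma coeff_diag_gdet (hn : 1 ≤ n) : coeff (diag n) (gdet n B) = 1 := by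
  classical
  rw [gdet_eq, coeff_sum]
  rw [Finset.sum_eq_single (1 : Equiv.Perm (Fin n))]
  · rw [coeff_smul, show diag n = msig (1 : Equiv.Perm (Fin n)) from rfl, coeff_monomial,
      if_pos rfl]
    simp
  · intro σp _ hσp
    have hne : msig σp ≠ diag n := by
      intro hEq
      have := W_msig_lt hn hσp
      rw [hEq, W_diag] at this
      exact lt_irrefl _ this
    rw [coeff_smul, coeff_monomial, if_neg hne, smul_zero]
  · intro h; exact absurd (Finset.mem_univ _) h

lemma gdet_mul_ne_zero (hn : 1 ≤ n) {g : MvPolynomial (Fin n × Fin n) B} (hg : g ≠ 0) :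
    gdet n B * g ≠ 0 := by
  classical
  obtain ⟨m, hm, hmax⟩ := Finset.exists_mem_eq_sup g.support
    (MvPolynomial.support_nonempty.mpr hg) (W n)
  have key : coeff (diag n + m) (gdet n B * g) = coeff m g := by
    rw [coeff_mul]
    rw [Finset.sum_eq_single ((diag n, m) : ((Fin n × Fin n) →₀ ℕ) × ((Fin n × Fin n) →₀ ℕ))]
    · rw [coeff_diag_gdet B hn, one_mul]
    · rintro ⟨ν, κ⟩ hmem hne
      rw [Finset.HasAntidiagonal.mem_antidiagonal] at hmem
      by_contra hnz
      have hν : ν ∈ (gdet n B).support := by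
        rw [mem_support_iff]; intro h0; exact hnz (by rw [h0, zero_mul])
      have hκ : κ ∈ g.support := by
        rw [mem_support_iff]; intro h0; exact hnz (by rw [h0, mul_zero])
      obtain ⟨σp, rfl⟩ := gdet_support B hν
      have hWν : W n (msig σp) ≤ n * (n + 1) := W_msig_le σp
      have hWκ : W n κ ≤ W n m := hmax ▸ Finset.le_sup hκ
      have hsum : W n (msig σp) + W n κ = n * (n + 1) + W n m := by
        rw [← map_add, hmem, map_add, W_diag]
      have hνN : W n (msig σp) = n * (n + 1) := by omega
      have hσ1 : σp = 1 := by
        by_contra h1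
        exact absurd hνN (Nat.ne_of_lt (W_msig_lt hn h1))
      subst hσ1
      have hκm : κ = m := by
        have h2 : diag n + κ = diag n + m := hmem
        exact add_left_cancel h2
      exact hne (Prod.ext rfl hκm)
    · intro h
      simp [Finset.mem_antidiagonal] at h
  intro h0
  rw [h0, coeff_zero] at key
  exact (mem_support_iff.mp hm) key.symm

lemma coeff_mem_of_mul_mem {A : Type} [CommRing A] (hn : 1 ≤ n) (I : Ideal A)
    {w : MvPolynomial (Fin n × Fin n) A}
    (h : ∀ m, coeff m (gdet n A * w) ∈ I) : ∀ m, coeff m w ∈ I := by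
  classical
  have hmap : MvPolynomial.map (Ideal.Quotient.mk I) (gdet n A) = gdet n (A ⧸ I) := by
    rw [gdet, RingHom.map_det, gdet]
    congr 1
    ext i j
    simp
  have h0 : MvPolynomial.map (Ideal.Quotient.mk I) (gdet n A * w) = 0 := by
    ext m
    rw [coeff_map, coeff_zero, Ideal.Quotient.eq_zero_iff_mem]
    exact h m
  rw [map_mul, hmap] at h0
  have hw0 : MvPolynomial.map (Ideal.Quotient.mk I) w = 0 := by
    by_contra hne
    exact gdet_mul_ne_zero (A ⧸ I) hn hne h0
  intro m
  have h3 := congrArg (coeff m) hw0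
  rw [coeff_map, coeff_zero] at h3
  exact Ideal.Quotient.eq_zero_iff_mem.mp h3

end DetFFAux

open DetFFAux TensorProduct LinearMap in
/-- For a commutative ring `A` and `n ≥ 1`, the quotient
`A[X_{ij}]/(det)` of the polynomial ring in the `n²` variables `X_{ij}` by the
principal ideal generated by the generic determinant is faithfully flat over `A`. -/
theorem faithfullyFlat_mvPolynomial_quotient_span_det
    (A : Type) [CommRing A] (n : ℕ) (hn : 1 ≤ n)
    (d : MvPolynomial (Fin n × Fin n) A)
    (hd : d = Matrix.det (Matrix.of fun i j : Fin n => MvPolynomial.X (i, j))) :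
    Module.FaithfullyFlat A (MvPolynomial (Fin n × Fin n) A ⧸ Ideal.span {d}) := by
  classical
  have hd' : d = gdet n A := hd
  -- the quotient map as an `A`-linear map
  let π : MvPolynomial (Fin n × Fin n) A →ₗ[A] (MvPolynomial (Fin n × Fin n) A ⧸ Ideal.span {d}) :=
    (Ideal.Quotient.mkₐ A (Ideal.span {d})).toLinearMap
  have hπ : Function.Surjective π := fun s => Ideal.Quotient.mk_surjective s
  have hπ0 : ∀ p : MvPolynomial (Fin n × Fin n) A, π (d * p) = 0 := by
    intro p
    show Ideal.Quotient.mkₐ A (Ideal.span {d}) (d * p) = 0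
    rw [Ideal.Quotient.mkₐ_eq_mk, Ideal.Quotient.eq_zero_iff_mem]
    exact Ideal.mem_span_singleton'.mpr ⟨p, mul_comm p d⟩
  haveI hflat : Module.Flat A (MvPolynomial (Fin n × Fin n) A ⧸ Ideal.span {d}) := by
    rw [Module.Flat.iff_rTensor_injective']
    intro I
    -- `j : I ⊗ P → P`
    let j : (↥I ⊗[A] MvPolynomial (Fin n × Fin n) A) →ₗ[A] MvPolynomial (Fin n × Fin n) A :=
      (TensorProduct.lid A (MvPolynomial (Fin n × Fin n) A)).toLinearMap ∘ₗ
        LinearMap.rTensor (MvPolynomial (Fin n × Fin n) A) I.subtype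
    have hj_tmul : ∀ (i : ↥I) (p : MvPolynomial (Fin n × Fin n) A), j (i ⊗ₜ p) = (i : A) • p := by
      intro i p
      simp only [j, LinearMap.coe_comp, LinearEquiv.coe_coe, Function.comp_apply,
        LinearMap.rTensor_tmul, Submodule.coe_subtype, TensorProduct.lid_tmul]
    have hjinj : Function.Injective j := by
      refine (TensorProduct.lid A (MvPolynomial (Fin n × Fin n) A)).injective.comp ?_
      exact Module.Flat.rTensor_preserves_injective_linearMap I.subtype
        (Submodule.injective_subtype I)
    have hjcoeff : ∀ (t : ↥I ⊗[A] MvPolynomial (Fin n × Fin n) A)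
        (m : (Fin n × Fin n) →₀ ℕ), MvPolynomial.coeff m (j t) ∈ I := by
      intro t
      induction t with
      | zero => intro m; simp
      | tmul i p =>
          intro m
          rw [hj_tmul, MvPolynomial.coeff_smul, smul_eq_mul]
          exact I.mul_mem_right _ i.2
      | add x y hx hy =>
          intro m
          rw [map_add, MvPolynomial.coeff_add]
          exact I.add_mem (hx m) (hy m)
    have hjmul : ∀ t : ↥I ⊗[A] MvPolynomial (Fin n × Fin n) A,
        j (LinearMap.lTensor (↥I) (LinearMap.mulLeft A d) t) = d * j t := by
      intro t
      induction t with
      | zero => simp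
      | tmul i p =>
          rw [LinearMap.lTensor_tmul, hj_tmul, hj_tmul]
          simp only [LinearMap.mulLeft_apply]
          rw [mul_smul_comm]
      | add x y hx hy => rw [map_add, map_add, map_add, hx, hy, mul_add]
    -- the corresponding map for the quotient
    have hcomm : ∀ t : ↥I ⊗[A] MvPolynomial (Fin n × Fin n) A,
        (TensorProduct.lid A (MvPolynomial (Fin n × Fin n) A ⧸ Ideal.span {d}))
          (LinearMap.rTensor _ I.subtype (LinearMap.lTensor (↥I) π t)) = π (j t) := by
      intro t
      induction t with
      | zero => simp
      | tmul i p =>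
          rw [LinearMap.lTensor_tmul, LinearMap.rTensor_tmul, TensorProduct.lid_tmul, hj_tmul,
            map_smul]
          rfl
      | add x y hx hy => simp only [map_add, hx, hy]
    rw [injective_iff_map_eq_zero]
    intro x hx
    obtain ⟨y, rfl⟩ := LinearMap.lTensor_surjective (↥I) hπ x
    have h0 : π (j y) = 0 := by
      rw [← hcomm y, hx]
      exact LinearEquiv.map_zero _
    have hmem : j y ∈ Ideal.span {d} := by
      rw [show π (j y) = Ideal.Quotient.mk (Ideal.span {d}) (j y) from rfl,
        Ideal.Quotient.eq_zero_iff_mem] at h0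
      exact h0
    obtain ⟨w, hw⟩ := Ideal.mem_span_singleton'.mp hmem
    -- coefficients of `w` lie in `I`
    have hdw : d * w = j y := by rw [mul_comm]; exact hw
    have hwI : ∀ m, MvPolynomial.coeff m w ∈ I := by
      refine coeff_mem_of_mul_mem hn I (fun m => ?_)
      rw [← hd', hdw]
      exact hjcoeff y m
    -- build a preimage of `w` in `I ⊗ P`
    let w'' : ↥I ⊗[A] MvPolynomial (Fin n × Fin n) A :=
      ∑ m ∈ w.support, (⟨MvPolynomial.coeff m w, hwI m⟩ : ↥I) ⊗ₜ
        (MvPolynomial.monomial m (1 : A))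
    have hjw : j w'' = w := by
      rw [map_sum]
      have hterm : ∀ m ∈ w.support,
          j ((⟨MvPolynomial.coeff m w, hwI m⟩ : ↥I) ⊗ₜ (MvPolynomial.monomial m (1 : A))) =
            MvPolynomial.monomial m (MvPolynomial.coeff m w) := by
        intro m _
        rw [hj_tmul, MvPolynomial.smul_monomial, smul_eq_mul, mul_one]
      rw [Finset.sum_congr rfl hterm]
      exact MvPolynomial.support_sum_monomial_coeff w
    have hy : y = LinearMap.lTensor (↥I) (LinearMap.mulLeft A d) w'' := by
      apply hjinj
      rw [hjmul, hjw, hdw]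
    rw [hy, ← LinearMap.lTensor_comp_apply]
    have hzero : π ∘ₗ LinearMap.mulLeft A d = 0 := by
      apply LinearMap.ext
      intro p
      exact hπ0 p
    rw [hzero, LinearMap.lTensor_zero]
    rfl
  refine { toFlat := hflat, submodule_ne_top := ?_ }
  intro m hm htop
  haveI : Nontrivial (A ⧸ m) := Ideal.Quotient.nontrivial_iff.mpr hm.ne_top
  let q : MvPolynomial (Fin n × Fin n) (A ⧸ m) →+*
      (MvPolynomial (Fin n × Fin n) (A ⧸ m) ⧸ Ideal.span {gdet n (A ⧸ m)}) :=
    Ideal.Quotient.mk (Ideal.span {gdet n (A ⧸ m)})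
  -- the natural `A`-algebra map
  let Φ : MvPolynomial (Fin n × Fin n) A →ₐ[A]
      (MvPolynomial (Fin n × Fin n) (A ⧸ m) ⧸ Ideal.span {gdet n (A ⧸ m)}) :=
    MvPolynomial.aeval (fun p : Fin n × Fin n => q (MvPolynomial.X p))
  have hΦd : Φ d = 0 := by
    rw [hd, AlgHom.map_det, AlgHom.mapMatrix_apply]
    have h1 : (Matrix.of fun i j : Fin n => (MvPolynomial.X ((i, j) : Fin n × Fin n) :
          MvPolynomial (Fin n × Fin n) A)).map Φ =
        (Matrix.of fun i j : Fin n => (MvPolynomial.X ((i, j) : Fin n × Fin n) :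
          MvPolynomial (Fin n × Fin n) (A ⧸ m))).map q := by
      ext i j
      simp [Φ]
    rw [h1, ← RingHom.mapMatrix_apply, ← RingHom.map_det]
    show q (gdet n (A ⧸ m)) = 0
    rw [Ideal.Quotient.eq_zero_iff_mem]
    exact Ideal.subset_span rfl
  let ψ : (MvPolynomial (Fin n × Fin n) A ⧸ Ideal.span {d}) →ₐ[A]
      (MvPolynomial (Fin n × Fin n) (A ⧸ m) ⧸ Ideal.span {gdet n (A ⧸ m)}) :=
    Ideal.Quotient.liftₐ (Ideal.span {d}) Φ (by
      intro a ha
      obtain ⟨c, hc⟩ := Ideal.mem_span_singleton'.mp ha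
      rw [← hc, map_mul, hΦd, mul_zero])
  have halgT : ∀ a ∈ m, algebraMap A
      (MvPolynomial (Fin n × Fin n) (A ⧸ m) ⧸ Ideal.span {gdet n (A ⧸ m)}) a = 0 := by
    intro a ha
    have h2 : algebraMap A (A ⧸ m) a = 0 := by
      rw [Ideal.Quotient.algebraMap_eq, Ideal.Quotient.eq_zero_iff_mem]
      exact ha
    rw [IsScalarTower.algebraMap_apply A (A ⧸ m)
      (MvPolynomial (Fin n × Fin n) (A ⧸ m) ⧸ Ideal.span {gdet n (A ⧸ m)}), h2, map_zero]
  rw [Ideal.smul_top_eq_map] at htop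
  have htop' : m.map (algebraMap A (MvPolynomial (Fin n × Fin n) A ⧸ Ideal.span {d})) = ⊤ := by
    rw [Submodule.restrictScalars_eq_top_iff] at htop
    exact htop
  have hmapT : m.map (algebraMap A
      (MvPolynomial (Fin n × Fin n) (A ⧸ m) ⧸ Ideal.span {gdet n (A ⧸ m)})) = ⊤ := by
    have h3 := congrArg (Ideal.map (ψ : (MvPolynomial (Fin n × Fin n) A ⧸ Ideal.span {d}) →+*
      (MvPolynomial (Fin n × Fin n) (A ⧸ m) ⧸ Ideal.span {gdet n (A ⧸ m)}))) htop'
    rw [Ideal.map_map, Ideal.map_top] at h3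
    rw [← h3]
    congr 1
    exact (ψ.comp_algebraMap).symm ▸ rfl
  have hbot : m.map (algebraMap A
      (MvPolynomial (Fin n × Fin n) (A ⧸ m) ⧸ Ideal.span {gdet n (A ⧸ m)})) = ⊥ := by
    rw [Ideal.map_eq_bot_iff_le_ker]
    intro a ha
    rw [RingHom.mem_ker]
    exact halgT a ha
  have h10 : (1 : MvPolynomial (Fin n × Fin n) (A ⧸ m) ⧸ Ideal.span {gdet n (A ⧸ m)}) = 0 := by
    have : (1 : MvPolynomial (Fin n × Fin n) (A ⧸ m) ⧸ Ideal.span {gdet n (A ⧸ m)}) ∈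
        (⊥ : Ideal (MvPolynomial (Fin n × Fin n) (A ⧸ m) ⧸ Ideal.span {gdet n (A ⧸ m)})) := by
      rw [← hbot, hmapT]
      exact Submodule.mem_top
    simpa using this
  have hmem1 : (1 : MvPolynomial (Fin n × Fin n) (A ⧸ m)) ∈ Ideal.span {gdet n (A ⧸ m)} := by
    rw [← Ideal.Quotient.eq_zero_iff_mem, map_one]
    exact h10
  obtain ⟨c, hc⟩ := Ideal.mem_span_singleton'.mp hmem1
  have hu : IsUnit (gdet n (A ⧸ m)) := IsUnit.of_mul_eq_one c (by rw [mul_comm]; exact hc)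
  have hev : (MvPolynomial.eval (fun _ => (0 : A ⧸ m))) (gdet n (A ⧸ m)) = 0 := by
    rw [gdet, RingHom.map_det, RingHom.mapMatrix_apply]
    have h2 : (Matrix.of fun i j : Fin n => (MvPolynomial.X ((i, j) : Fin n × Fin n) :
          MvPolynomial (Fin n × Fin n) (A ⧸ m))).map (MvPolynomial.eval fun _ => (0 : A ⧸ m)) =
        0 := by
      ext i j
      simp
    rw [h2, haveI : Nonempty (Fin n) := ⟨⟨0, hn⟩⟩; Matrix.det_zero]
  have hcon := hu.map (MvPolynomial.eval fun _ => (0 : A ⧸ m))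
  rw [hev] at hcon
  exact not_isUnit_zero hcon
end

section
/- Let A be a commutative ring and n ≥ 1. Then the element det is a nonzerodivisor of the polynomial ring A[X_{ij}]: for every f ∈ A[X_{ij}], if f · det = 0 then f = 0. -/
/-- For a commutative ring `A` and `n ≥ 1`, the generic determinant
`det ∈ A[X_{ij}]` is a nonzerodivisor: if `f · det = 0` then `f = 0`. -/
theorem det_nonZeroDivisor_mvPolynomial
    (A : Type) [CommRing A] (n : ℕ) (hn : 1 ≤ n)
    (f : MvPolynomial (Fin n × Fin n) A)
    (hf : f * Matrix.det (Matrix.of fun i j : Fin n => MvPolynomial.X (i, j)) = 0) :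
    f = 0 := by
  let σ : MvPolynomial (Fin n × Fin n) A →ₐ[A] Polynomial (MvPolynomial (Fin n × Fin n) A) :=
    MvPolynomial.aeval fun p : Fin n × Fin n =>
      Polynomial.C (MvPolynomial.X p) + if p.1 = p.2 then Polynomial.X else 0
  set M : Matrix (Fin n) (Fin n) (MvPolynomial (Fin n × Fin n) A) :=
    Matrix.of fun i j => MvPolynomial.X (i, j) with hM
  have hdet : σ M.det = (-M).charpoly := by
    rw [AlgHom.map_det, Matrix.charpoly]
    congr 1
    ext i j
    by_cases h : i = j
    · subst h
      simp [σ, hM, MvPolynomial.aeval_X, Matrix.charmatrix_apply_eq, add_comm, sub_neg_eq_add]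
    · simp [σ, hM, MvPolynomial.aeval_X, Matrix.charmatrix_apply_ne _ _ _ h, h]
  have h0 : (-M).charpoly * σ f = 0 := by
    rw [← hdet, mul_comm, ← map_mul, hf, map_zero]
  have hσf : σ f = 0 := (Matrix.charpoly_monic (-M)).mul_right_eq_zero_iff.mp h0
  have hinj : (Polynomial.evalRingHom (0 : MvPolynomial (Fin n × Fin n) A)).comp σ.toRingHom =
      RingHom.id _ := by
    apply MvPolynomial.ringHom_ext
    · intro a; simp [σ, MvPolynomial.aeval_C, Polynomial.algebraMap_apply,
        MvPolynomial.algebraMap_eq]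
    · intro p
      by_cases h : p.1 = p.2 <;> simp [σ, MvPolynomial.aeval_X, h]
  have key : Polynomial.eval 0 (σ f) = f := by
    have := congrArg (fun g => g f) hinj
    simpa using this
  rw [hσf] at key
  simpa using key.symm
end

section
/- Let A be a nontrivial commutative ring and n ≥ 1, and let B = A[X_{ij}, 1/det] be the localization of A[X_{ij}] away from det (so det is a unit of B). If a, b ∈ A are units and k, m ∈ ℤ are integers such that a · det^k = b · det^m in B, then a = b and k = m. In other words, the map A^× × ℤ → B^× sending (a, k) ↦ a · det^k is injective. -/
/-- Let `A` be a nontrivial commutative ring, `n ≥ 1`, and let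
`B = A[X_{ij}, 1/det]` be the localization of the polynomial ring away from the generic
determinant.  The map `Aˣ × ℤ → Bˣ`, `(a, k) ↦ a · det^k`, is injective: if
`a · det^k = b · det^m` with `a, b ∈ Aˣ` and `k, m ∈ ℤ`, then `a = b` and `k = m`. -/
theorem units_localization_away_det_injective
    (A : Type) [CommRing A] [Nontrivial A] (n : ℕ) (hn : 1 ≤ n)
    (d : MvPolynomial (Fin n × Fin n) A)
    (hd : d = Matrix.det (Matrix.of fun i j : Fin n => MvPolynomial.X (i, j)))
    (u : (Localization.Away d)ˣ)
    (hu : (u : Localization.Away d) = algebraMap (MvPolynomial (Fin n × Fin n) A) _ d) :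
    Function.Injective (fun p : Aˣ × ℤ =>
      Units.map (algebraMap A (Localization.Away d)).toMonoidHom p.1 * u ^ p.2) := by
  classical
  set L := LaurentPolynomial A
  set i0 : Fin n := ⟨0, hn⟩
  -- evaluation at diag(T, 1, ..., 1)
  set f2 : MvPolynomial (Fin n × Fin n) A →+* L :=
    MvPolynomial.eval₂Hom LaurentPolynomial.C
      (fun p => if p.1 = p.2 then (if p.1 = i0 then LaurentPolynomial.T 1 else 1) else 0)
    with hf2
  have hf2d : f2 d = LaurentPolynomial.T 1 := by
    rw [hd, RingHom.map_det]
    have : f2.mapMatrix (Matrix.of fun i j : Fin n => MvPolynomial.X (i, j)) =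
        Matrix.diagonal (fun i => if i = i0 then LaurentPolynomial.T 1 else 1) := by
      ext i j
      simp [Matrix.diagonal_apply, hf2]
    rw [this, Matrix.det_diagonal]
    simp [Finset.prod_ite_eq']
  have hdu : IsUnit (f2 d) := hf2d ▸ LaurentPolynomial.isUnit_T 1
  set ψ : Localization.Away d →+* L := Localization.awayLift f2 d hdu with hψ
  set w : Lˣ := hdu.unit with hwdef
  have hwcoe : (w : L) = LaurentPolynomial.T 1 := by rw [hwdef, IsUnit.unit_spec, hf2d]
  have hwinv : ((w⁻¹ : Lˣ) : L) = LaurentPolynomial.T (-1) := by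
    refine Units.inv_eq_of_mul_eq_one_right ?_
    rw [hwcoe, ← LaurentPolynomial.T_add]
    simp
  have hwz : ∀ k : ℤ, ((w ^ k : Lˣ) : L) = LaurentPolynomial.T k := by
    intro k
    induction k using Int.induction_on with
    | zero => simp [LaurentPolynomial.T_zero]
    | succ i ih =>
        rw [zpow_add_one, Units.val_mul, ih, hwcoe, ← LaurentPolynomial.T_add]
    | pred i ih =>
        rw [zpow_sub_one, Units.val_mul, ih, hwinv, ← LaurentPolynomial.T_add]
        congr 1
  have hψu : Units.map ψ.toMonoidHom u = w := by
    ext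
    simp only [Units.coe_map, RingHom.toMonoidHom_eq_coe, MonoidHom.coe_coe, hu, hwcoe]
    rw [hψ]
    rw [IsLocalization.Away.lift_eq, hf2d]
  have hψa : ∀ a : A, ψ (algebraMap A (Localization.Away d) a) = LaurentPolynomial.C a := by
    intro a
    rw [IsScalarTower.algebraMap_apply A (MvPolynomial (Fin n × Fin n) A) (Localization.Away d),
      hψ, IsLocalization.Away.lift_eq]
    simp [hf2]
  intro p q h
  have h2 := congrArg (fun z : (Localization.Away d)ˣ =>
    ((Units.map ψ.toMonoidHom z : Lˣ) : L)) h
  simp only [map_mul, map_zpow, hψu, Units.val_mul, hwz] at h2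
  have h3 : LaurentPolynomial.C (p.1 : A) * LaurentPolynomial.T p.2 =
      LaurentPolynomial.C (q.1 : A) * LaurentPolynomial.T q.2 := by
    have e1 : ((Units.map ψ.toMonoidHom (Units.map (algebraMap A
        (Localization.Away d)).toMonoidHom p.1) : Lˣ) : L) = LaurentPolynomial.C (p.1 : A) := by
      simp only [Units.coe_map, RingHom.toMonoidHom_eq_coe, MonoidHom.coe_coe]
      exact hψa p.1
    have e2 : ((Units.map ψ.toMonoidHom (Units.map (algebraMap A
        (Localization.Away d)).toMonoidHom q.1) : Lˣ) : L) = LaurentPolynomial.C (q.1 : A) := by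
      simp only [Units.coe_map, RingHom.toMonoidHom_eq_coe, MonoidHom.coe_coe]
      exact hψa q.1
    rwa [e1, e2] at h2
  rw [← LaurentPolynomial.single_eq_C_mul_T, ← LaurentPolynomial.single_eq_C_mul_T] at h3
  rcases AddMonoidAlgebra.single_inj.mp h3 with ⟨hk, ha⟩ | ⟨ha, _⟩
  · exact Prod.ext (Units.ext ha) hk
  · exact absurd ha p.1.ne_zero
end

section
/- Let A be a commutative ring, n ≥ 1, and let a ∈ A satisfy a ≠ 0 and a² = 0. Then the image of det + a in B = A[X_{ij}, 1/det] is a unit (with (det + a)(det − a) = det²), but there exist no unit b ∈ A^× and integer k ∈ ℤ such that det + a = b · det^k in B. -/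
open MvPolynomial LaurentPolynomial

/-- Let `A` be a commutative ring, `n ≥ 1`, and `a ∈ A` with `a ≠ 0`
and `a² = 0`.  Then `(det + a)(det − a) = det²` in `A[X_{ij}]`, the image of `det + a`
in `B = A[X_{ij}, 1/det]` is a unit, but `det + a` is not of the form `b · det^k` in `B`
for any unit `b ∈ Aˣ` and integer `k ∈ ℤ`. -/
theorem det_add_nilpotent_unit_not_standard_form
    (A : Type) [CommRing A] (n : ℕ) (hn : 1 ≤ n)
    (a : A) (ha : a ≠ 0) (ha2 : a ^ 2 = 0)
    (d : MvPolynomial (Fin n × Fin n) A)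
    (hd : d = Matrix.det (Matrix.of fun i j : Fin n => MvPolynomial.X (i, j)))
    (u : (Localization.Away d)ˣ)
    (hu : (u : Localization.Away d) = algebraMap (MvPolynomial (Fin n × Fin n) A) _ d) :
    (d + MvPolynomial.C a) * (d - MvPolynomial.C a) = d ^ 2 ∧
    IsUnit (algebraMap (MvPolynomial (Fin n × Fin n) A) (Localization.Away d)
      (d + MvPolynomial.C a)) ∧
    ¬ ∃ (b : Aˣ) (k : ℤ),
      algebraMap (MvPolynomial (Fin n × Fin n) A) (Localization.Away d)
          (d + MvPolynomial.C a) =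
        ((Units.map (algebraMap A (Localization.Away d)).toMonoidHom b * u ^ k :
          (Localization.Away d)ˣ) : Localization.Away d) := by
  have hA1 : (1 : A) ≠ 0 := fun h => ha (by rw [← mul_one a, h, mul_zero])
  have hCa2 : (MvPolynomial.C a : MvPolynomial (Fin n × Fin n) A) ^ 2 = 0 := by
    rw [← map_pow, ha2, map_zero]
  have h1 : (d + MvPolynomial.C a) * (d - MvPolynomial.C a) = d ^ 2 := by
    linear_combination -hCa2
  refine ⟨h1, ?_, ?_⟩
  · apply isUnit_of_mul_isUnit_left (y := algebraMap _ (Localization.Away d)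
      (d - MvPolynomial.C a))
    rw [← map_mul, h1, map_pow, ← hu]
    exact u.isUnit.pow 2
  · rintro ⟨b, k, heq⟩
    set ψ : MvPolynomial (Fin n × Fin n) A →+* A[T;T⁻¹] :=
      MvPolynomial.eval₂Hom LaurentPolynomial.C
        (fun p => if p.1 = p.2 then T 1 else 0) with hψdef
    have hψd : ψ d = T (n : ℤ) := by
      rw [hd, RingHom.map_det, RingHom.mapMatrix_apply]
      have hM : (Matrix.of fun i j : Fin n =>
          (MvPolynomial.X (i, j) : MvPolynomial (Fin n × Fin n) A)).map ψ
          = Matrix.diagonal (fun _ => (T 1 : A[T;T⁻¹])) := by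
        ext i j
        by_cases h : i = j <;> simp [Matrix.diagonal, h, hψdef]
      rw [hM, Matrix.det_diagonal, Finset.prod_const, T_pow]
      simp
    have hψdU : IsUnit (ψ d) := hψd ▸ isUnit_T (n : ℤ)
    set Ψ : Localization.Away d →+* A[T;T⁻¹] := IsLocalization.Away.lift d hψdU with hΨdef
    have hΨ : ∀ x, Ψ (algebraMap _ (Localization.Away d) x) = ψ x := fun x =>
      IsLocalization.Away.lift_eq d hψdU x
    set tU : (A[T;T⁻¹])ˣ := (isUnit_T (R := A) 1).unit with htU
    have htUval : (tU : A[T;T⁻¹]) = T 1 := (isUnit_T 1).unit_spec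
    have htUinv : ((tU⁻¹ : (A[T;T⁻¹])ˣ) : A[T;T⁻¹]) = T (-1) := by
      calc ((tU⁻¹ : (A[T;T⁻¹])ˣ) : A[T;T⁻¹])
          = T (-1) * (T 1 * ((tU⁻¹ : (A[T;T⁻¹])ˣ) : A[T;T⁻¹])) := by
            rw [← mul_assoc, ← T_add]; norm_num
        _ = T (-1) := by rw [← htUval, Units.mul_inv, mul_one]
    have key : ∀ m : ℤ, ((tU ^ m : (A[T;T⁻¹])ˣ) : A[T;T⁻¹]) = T m := by
      intro m
      induction m using Int.induction_on with
      | zero => simp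
      | succ i ih => rw [zpow_add_one, Units.val_mul, ih, htUval, ← T_add]
      | pred i ih =>
          rw [zpow_sub_one, Units.val_mul, ih, htUinv, ← T_add]
          norm_num [sub_eq_add_neg]
    set u' : (A[T;T⁻¹])ˣ := Units.map Ψ.toMonoidHom u with hu'def
    have hu'val : (u' : A[T;T⁻¹]) = T (n : ℤ) := by
      rw [hu'def, Units.coe_map]
      show Ψ (u : Localization.Away d) = _
      rw [hu, hΨ, hψd]
    have hu'eq : u' = tU ^ (n : ℕ) := by
      ext
      rw [hu'val, Units.val_pow_eq_pow_val, htUval, T_pow, mul_one]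
    have hψC : ∀ c : A, ψ (MvPolynomial.C c) = LaurentPolynomial.C c := fun c => by
      simp [hψdef]
    have hb : Ψ (algebraMap A (Localization.Away d) (b : A))
        = LaurentPolynomial.C (b : A) := by
      rw [IsScalarTower.algebraMap_apply A (MvPolynomial (Fin n × Fin n) A)
        (Localization.Away d), hΨ]
      simp [hψdef, MvPolynomial.algebraMap_eq]
    have hk : Ψ ((u ^ k : (Localization.Away d)ˣ) : Localization.Away d)
        = T ((n : ℤ) * k) := by
      have hmap : Units.map Ψ.toMonoidHom (u ^ k) = tU ^ ((n : ℤ) * k) := by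
        rw [map_zpow, ← hu'def, hu'eq, ← zpow_natCast tU n, ← zpow_mul]
      calc Ψ ((u ^ k : (Localization.Away d)ˣ) : Localization.Away d)
          = ((Units.map Ψ.toMonoidHom (u ^ k) : (A[T;T⁻¹])ˣ) : A[T;T⁻¹]) :=
            (Units.coe_map _ _).symm
        _ = T ((n : ℤ) * k) := by rw [hmap, key]
    have h2 := congrArg Ψ heq
    rw [hΨ, map_add, hψd, hψC, Units.val_mul, map_mul, hk] at h2
    rw [show ((Units.map (algebraMap A (Localization.Away d)).toMonoidHom b :
        (Localization.Away d)ˣ) : Localization.Away d)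
        = algebraMap A (Localization.Away d) (b : A) from rfl, hb] at h2
    -- now h2 : T n + C a = C b * T (n * k) in A[T;T⁻¹]
    rw [← single_eq_C_mul_T] at h2
    have hTs : (T (n : ℤ) : A[T;T⁻¹]) = AddMonoidAlgebra.single ((n : ℤ)) (1 : A) := by
      rw [single_eq_C_mul_T, map_one, one_mul]
    have hCs : (LaurentPolynomial.C a : A[T;T⁻¹]) = AddMonoidAlgebra.single (0 : ℤ) a := by
      rw [single_eq_C_mul_T, T_zero, mul_one]
    rw [hTs, hCs] at h2
    have hnZ : (n : ℤ) ≠ 0 := by positivity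
    have h2' : (Finsupp.single ((n : ℤ)) (1 : A) + Finsupp.single 0 a : ℤ →₀ A)
        = Finsupp.single ((n : ℤ) * k) (b : A) := congrArg AddMonoidAlgebra.coeff h2
    have h0 := DFunLike.congr_fun h2' 0
    have hn' := DFunLike.congr_fun h2' (n : ℤ)
    simp only [Finsupp.add_apply, Finsupp.single_apply] at h0 hn'
    simp only [if_neg hnZ, if_true, if_neg (show ¬((0 : ℤ) = (n : ℤ)) from fun h => hnZ h.symm),
      zero_add, add_zero] at h0 hn'
    by_cases hk0 : (n : ℤ) * k = 0
    · have hkn : (n : ℤ) * k ≠ (n : ℤ) := by rw [hk0]; exact fun h => hnZ h.symm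
      rw [if_neg hkn] at hn'
      exact hA1 hn'
    · rw [if_neg hk0] at h0
      exact ha h0
end
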